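/- Let R be a Cohen–Macaulay semi-standard graded ring admitting a degree-0 injection φ : R → ω_R(−a) with cokernel C, where a = a(R). Then the minimal number of generators of C equals r(R) − 1, where r(R) is the Cohen–Macaulay type of R. -/

import Mathlib

set_option maxHeartbeats 1000000

noncomputable section

open Finset PowerSeries

/-- Minimal number of generators of an `R`-module `M`. -/
def muGen (R : Type*) [CommRing R] (M : Type*) [AddCommGroup M] [Module R M] : ℕ :=
  sInf {n : ℕ | ∃ t : Finset M, t.card = n ∧ Submodule.span R (t : Set M) = ⊤}


namespace ThmAux

variable {k : Type*} [Field k] {R : Type*} [CommRing R] [Algebra k R]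
variable {Ω : Type*} [AddCommGroup Ω] [Module R Ω] [Module k Ω] [IsScalarTower k R Ω]
variable (𝒜 : ℕ → Submodule k R) [GradedAlgebra 𝒜]
variable (ℳ : ℤ → Submodule k Ω) [DirectSum.Decomposition ℳ]

/-- Projection onto the degree `n` component of `Ω`. -/
def piM (n : ℤ) : Ω →+ Ω where
  toFun w := ↑(DirectSum.decompose ℳ w n)
  map_zero' := by simp
  map_add' x y := by simp [DirectSum.decompose_add]

lemma piM_mem (n : ℤ) (w : Ω) : piM ℳ n w ∈ ℳ n := SetLike.coe_mem _

lemma piM_of_mem_same {n : ℤ} {w : Ω} (h : w ∈ ℳ n) : piM ℳ n w = w :=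
  DirectSum.decompose_of_mem_same ℳ h

lemma piM_of_mem_ne {n m : ℤ} {w : Ω} (h : w ∈ ℳ n) (hnm : n ≠ m) : piM ℳ m w = 0 := by
  have := DirectSum.decompose_of_mem_ne ℳ h hnm
  simpa [piM] using this

variable (hsmul : ∀ (i : ℕ) (j : ℤ), ∀ r ∈ 𝒜 i, ∀ x ∈ ℳ j, r • x ∈ ℳ (i + j))

include hsmul in
lemma piM_smul_of_mem {j : ℕ} {r : R} (hr : r ∈ 𝒜 j) (w : Ω) (n : ℤ) :
    piM ℳ n (r • w) = r • piM ℳ (n - (j : ℤ)) w := by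
  induction w using DirectSum.Decomposition.inductionOn ℳ with
  | zero => simp
  | @homogeneous d wd =>
    have hw : (wd : Ω) ∈ ℳ d := wd.2
    have h1 : r • (wd : Ω) ∈ ℳ ((j : ℤ) + d) := hsmul j d r hr _ hw
    by_cases hn : n = (j : ℤ) + d
    · subst hn
      rw [piM_of_mem_same ℳ h1]
      have : (j : ℤ) + d - (j : ℤ) = d := by ring
      rw [this, piM_of_mem_same ℳ hw]
    · rw [piM_of_mem_ne ℳ h1 (Ne.symm hn)]
      have : n - (j : ℤ) ≠ d := fun hc => hn (by omega)
      rw [piM_of_mem_ne ℳ hw (Ne.symm this), smul_zero]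
  | add w₁ w₂ ih₁ ih₂ =>
    rw [smul_add, map_add, map_add, ih₁, ih₂, smul_add]

include hsmul in
lemma piM_smul [∀ (i : ℕ) (x : (𝒜 i)), Decidable (x ≠ 0)] (c : R) (w : Ω) (n : ℤ) :
    piM ℳ n (c • w) = ∑ j ∈ DFinsupp.support (DirectSum.decompose 𝒜 c),
      ((DirectSum.decompose 𝒜 c j : R)) • piM ℳ (n - (j : ℤ)) w := by
  classical
  conv_lhs => rw [← DirectSum.sum_support_decompose 𝒜 c]
  rw [Finset.sum_smul, map_sum]
  exact Finset.sum_congr rfl fun j _ =>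
    piM_smul_of_mem 𝒜 ℳ hsmul (SetLike.coe_mem _) w n

include hsmul in
lemma piM_smul_mem (P : AddSubmonoid Ω) (c : R) (w : Ω) (n : ℤ)
    (h : ∀ j : ℕ, ((DirectSum.decompose 𝒜 c j : R)) • piM ℳ (n - (j : ℤ)) w ∈ P) :
    piM ℳ n (c • w) ∈ P := by
  classical
  rw [piM_smul 𝒜 ℳ hsmul]
  exact AddSubmonoid.sum_mem P fun j _ => h j

include hsmul in
lemma piM_smul_mem' (P : Submodule R Ω) (c : R) (w : Ω) (n : ℤ)
    (h : ∀ j : ℕ, ((DirectSum.decompose 𝒜 c j : R)) • piM ℳ (n - (j : ℤ)) w ∈ P) :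
    piM ℳ n (c • w) ∈ P :=
  piM_smul_mem 𝒜 ℳ hsmul P.toAddSubmonoid c w n h

/-- degree-zero projection as ring hom -/
abbrev p0 : R →+* R := GradedRing.projZeroRingHom 𝒜

lemma p0_mem (r : R) : p0 𝒜 r ∈ 𝒜 0 := by
  rw [GradedRing.projZeroRingHom_apply]
  exact SetLike.coe_mem _

lemma p0_of_mem {r : R} (h : r ∈ 𝒜 0) : p0 𝒜 r = r := by
  rw [GradedRing.projZeroRingHom_apply]
  exact DirectSum.decompose_of_mem_same 𝒜 h

lemma mem_irrelevant_iff' (r : R) :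
    r ∈ (HomogeneousIdeal.irrelevant 𝒜).toIdeal ↔ p0 𝒜 r = 0 := by
  rw [HomogeneousIdeal.mem_iff, HomogeneousIdeal.mem_irrelevant_iff,
    GradedRing.proj_apply, GradedRing.projZeroRingHom_apply]

lemma sub_p0_mem_irrelevant (r : R) :
    r - p0 𝒜 r ∈ (HomogeneousIdeal.irrelevant 𝒜).toIdeal := by
  rw [mem_irrelevant_iff', map_sub]
  have : p0 𝒜 (p0 𝒜 r) = p0 𝒜 r := p0_of_mem 𝒜 (p0_mem 𝒜 r)
  rw [this, sub_self]


set_option linter.unusedSectionVars false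

include hsmul in
lemma components_mem_span (S : Set Ω) (hS : ∀ y ∈ S, ∃ d, y ∈ ℳ d) :
    ∀ w ∈ Submodule.span R S, ∀ n : ℤ, piM ℳ n w ∈ Submodule.span R S := by
  intro w hw
  induction hw using Submodule.span_induction with
  | mem y hy =>
    intro n
    obtain ⟨d, hd⟩ := hS y hy
    by_cases hnd : d = n
    · subst hnd; rw [piM_of_mem_same ℳ hd]; exact Submodule.subset_span hy
    · rw [piM_of_mem_ne ℳ hd hnd]; exact zero_mem _
  | zero => intro n; simp
  | add y z _ _ ihy ihz => intro n; rw [map_add]; exact add_mem (ihy n) (ihz n)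
  | smul r y _ ihy =>
    intro n
    exact piM_smul_mem' 𝒜 ℳ hsmul _ r y n fun j => Submodule.smul_mem _ _ (ihy _)

include hsmul in
/-- Graded Nakayama-type lemma. -/
lemma gradedNakayama {a : ℤ} (hbot : ∀ n : ℤ, n < -a → ℳ n = ⊥)
    (I₀ : Ideal R) (hI₀0 : ∀ c ∈ I₀, p0 𝒜 c ∈ I₀)
    (p : ℕ) (hp : I₀ ^ (p + 1) = ⊥)
    (T : Submodule R Ω) (hT : ∀ (n : ℤ), ∀ w ∈ T, piM ℳ n w ∈ T)
    (hcover : ∀ w : Ω, w ∈ T ⊔ I₀ • (⊤ : Submodule R Ω) ⊔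
      (HomogeneousIdeal.irrelevant 𝒜).toIdeal • (⊤ : Submodule R Ω)) :
    T = ⊤ := by
  have main : ∀ N : ℕ, ∀ n : ℤ, n < -a + N → ∀ w ∈ ℳ n, w ∈ T := by
    intro N
    induction N with
    | zero =>
      intro n hn w hw
      have hb : ℳ n = ⊥ := hbot n (by omega)
      rw [hb] at hw
      have : w = 0 := by simpa using hw
      rw [this]; exact zero_mem T
    | succ N IH =>
      intro n hn w hw
      by_cases hn' : n < -a + N
      · exact IH n hn' w hw
      · have hne : n = -a + N := by omega
        -- generators of the `t`-th error term
        set Gen : ℕ → Set Ω :=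
          fun t => {y | ∃ c v, c ∈ 𝒜 0 ∧ c ∈ (I₀ ^ t : Ideal R) ∧ v ∈ ℳ n ∧ y = c • v} with hGen
        set E : ℕ → AddSubmonoid Ω := fun t => AddSubmonoid.closure (Gen t) with hE
        -- fact for irrelevant part
        have hirr : ∀ z ∈ ((HomogeneousIdeal.irrelevant 𝒜).toIdeal •
            (⊤ : Submodule R Ω) : Submodule R Ω), piM ℳ n z ∈ T := by
          intro z hz
          refine Submodule.smul_induction_on hz (fun c hc y _ => ?_)
            (fun y z hy hz => by rw [map_add]; exact add_mem hy hz)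
          refine piM_smul_mem' 𝒜 ℳ hsmul _ c y n fun j => ?_
          rcases Nat.eq_zero_or_pos j with hj | hj
          · subst hj
            have hc0 : (DirectSum.decompose 𝒜 c 0 : R) = 0 := by
              rw [← GradedRing.projZeroRingHom_apply]
              exact (mem_irrelevant_iff' 𝒜 c).mp hc
            rw [hc0, zero_smul]; exact zero_mem _
          · have : piM ℳ (n - (j : ℤ)) y ∈ T :=
              IH (n - (j : ℤ)) (by omega) _ (piM_mem ℳ _ y)
            exact Submodule.smul_mem _ _ this
        -- fact for I₀ part
        have hI0part : ∀ z ∈ (I₀ • (⊤ : Submodule R Ω) : Submodule R Ω),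
            piM ℳ n z ∈ T.toAddSubmonoid ⊔ E 1 := by
          intro z hz
          refine Submodule.smul_induction_on hz (fun c hc y _ => ?_)
            (fun y z hy hz => by rw [map_add]; exact add_mem hy hz)
          refine piM_smul_mem 𝒜 ℳ hsmul _ c y n fun j => ?_
          rcases Nat.eq_zero_or_pos j with hj | hj
          · subst hj
            simp only [Nat.cast_zero, sub_zero]
            refine SetLike.le_def.mp le_sup_right (AddSubmonoid.subset_closure ?_)
            refine ⟨(DirectSum.decompose 𝒜 c 0 : R), piM ℳ n y, ?_, ?_,
              piM_mem ℳ _ y, rfl⟩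
            · exact SetLike.coe_mem _
            · rw [pow_one, ← GradedRing.projZeroRingHom_apply]
              exact hI₀0 c hc
          · have : piM ℳ (n - (j : ℤ)) y ∈ T :=
              IH (n - (j : ℤ)) (by omega) _ (piM_mem ℳ _ y)
            exact SetLike.le_def.mp le_sup_left (Submodule.smul_mem T _ this)
        -- the basic decomposition fact
        have F : ∀ v ∈ ℳ n, v ∈ T.toAddSubmonoid ⊔ E 1 := by
          intro v hv
          rcases Submodule.mem_sup.mp (hcover v) with ⟨y, hy, z, hz, hyz⟩
          rcases Submodule.mem_sup.mp hy with ⟨τ, hτ, u, hu, hτu⟩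
          have hv2 : v = piM ℳ n τ + piM ℳ n u + piM ℳ n z := by
            conv_lhs => rw [← piM_of_mem_same ℳ hv, ← hyz, ← hτu]
            rw [map_add, map_add]
          rw [hv2]
          exact add_mem (add_mem (SetLike.le_def.mp le_sup_left (hT n τ hτ)) (hI0part u hu))
            (SetLike.le_def.mp le_sup_left (hirr z hz))
        -- iteration
        have iterP : ∀ t : ℕ, ∀ v ∈ ℳ n, v ∈ T.toAddSubmonoid ⊔ E (t + 1) := by
          intro t
          induction t with
          | zero => exact F
          | succ t ihT =>
            intro v hv
            have hstep : ∀ δ ∈ E (t + 1), δ ∈ T.toAddSubmonoid ⊔ E (t + 2) := by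
              intro δ hδ
              induction hδ using AddSubmonoid.closure_induction with
              | mem y hy =>
                obtain ⟨c, v', hc0, hcI, hv', rfl⟩ := hy
                obtain ⟨τ₂, hτ₂, δ₂, hδ₂, hs2⟩ := AddSubmonoid.mem_sup.mp (F v' hv')
                rw [← hs2, smul_add]
                refine add_mem (SetLike.le_def.mp le_sup_left
                  (Submodule.smul_mem T c hτ₂)) ?_
                have hin : ∀ y ∈ E 1, c • y ∈ E (t + 2) := by
                  intro y hy
                  induction hy using AddSubmonoid.closure_induction with
                  | mem y' hy' =>
                    obtain ⟨c', v'', hc0', hcI', hv'', rfl⟩ := hy'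
                    rw [smul_smul]
                    refine AddSubmonoid.subset_closure ⟨c * c', v'', ?_, ?_, hv'', rfl⟩
                    · exact SetLike.mul_mem_graded hc0 hc0'
                    · have : (I₀ : Ideal R) ^ (t + 2) = I₀ ^ (t + 1) * I₀ ^ 1 := by
                        rw [← pow_add]
                      rw [this]
                      exact Ideal.mul_mem_mul hcI hcI'
                  | zero => rw [smul_zero]; exact zero_mem _
                  | add y₁ y₂ h₁ h₂ ih₁ ih₂ => rw [smul_add]; exact add_mem ih₁ ih₂
                exact SetLike.le_def.mp le_sup_right (hin δ₂ hδ₂)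
              | zero => exact zero_mem _
              | add y₁ y₂ h₁ h₂ ih₁ ih₂ => exact add_mem ih₁ ih₂
            obtain ⟨τ, hτ, δ, hδ, hsum⟩ := AddSubmonoid.mem_sup.mp (ihT v hv)
            rw [← hsum]
            exact add_mem (SetLike.le_def.mp le_sup_left hτ) (hstep δ hδ)
        -- finish at t = p
        have hE0 : ∀ δ ∈ E (p + 1), δ = 0 := by
          intro δ hδ
          induction hδ using AddSubmonoid.closure_induction with
          | mem y hy =>
            obtain ⟨c, v, _, hcI, _, rfl⟩ := hy
            rw [hp] at hcI
            have : c = 0 := by simpa using hcI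
            rw [this, zero_smul]
          | zero => rfl
          | add y₁ y₂ h₁ h₂ ih₁ ih₂ => rw [ih₁, ih₂, add_zero]
        obtain ⟨τ, hτ, δ, hδ, hsum⟩ := AddSubmonoid.mem_sup.mp (iterP p w hw)
        rw [← hsum, hE0 δ hδ, add_zero]
        exact hτ
  -- conclude
  rw [eq_top_iff]
  have : ∀ w : Ω, w ∈ T := by
    intro w
    induction w using DirectSum.Decomposition.inductionOn ℳ with
    | zero => exact zero_mem T
    | @homogeneous d wd =>
      exact main ((d + a).toNat + 1) d (by have := Int.self_le_toNat (d + a); omega) _ wd.2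
    | add w₁ w₂ ih₁ ih₂ => exact add_mem ih₁ ih₂
  exact fun w _ => this w



section MuGenLemmas

variable (R₀ : Type*) [CommRing R₀] {M : Type*} [AddCommGroup M] [Module R₀ M]

lemma muGen_le' (t : Finset M) (ht : Submodule.span R₀ (t : Set M) = ⊤) :
    muGen R₀ M ≤ t.card :=
  Nat.sInf_le ⟨t, rfl, ht⟩

lemma exists_muGen_spanning [Module.Finite R₀ M] :
    ∃ t : Finset M, t.card = muGen R₀ M ∧ Submodule.span R₀ (t : Set M) = ⊤ := by
  have hne : {n : ℕ | ∃ t : Finset M, t.card = n ∧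
      Submodule.span R₀ (t : Set M) = ⊤}.Nonempty := by
    obtain ⟨S, hS⟩ := Module.Finite.fg_top (R := R₀) (M := M)
    exact ⟨S.card, S, rfl, hS⟩
  obtain ⟨t, h1, h2⟩ := Nat.sInf_mem hne
  exact ⟨t, h1, h2⟩

lemma span_quot (m : Ideal R₀) (S : Set M) (hS : Submodule.span R₀ S = ⊤) :
    Submodule.span (R₀ ⧸ m)
      ((Submodule.Quotient.mk (p := (m • ⊤ : Submodule R₀ M))) '' S) = ⊤ := by
  rw [eq_top_iff]
  rintro q -
  obtain ⟨y, rfl⟩ := Submodule.Quotient.mk_surjective _ q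
  have hy : y ∈ Submodule.span R₀ S := hS ▸ Submodule.mem_top
  induction hy using Submodule.span_induction with
  | mem z hz => exact Submodule.subset_span ⟨z, hz, rfl⟩
  | zero =>
    have : (Submodule.Quotient.mk (0 : M) : M ⧸ (m • ⊤ : Submodule R₀ M)) = 0 :=
      Submodule.Quotient.mk_zero _
    rw [this]; exact zero_mem _
  | add y z _ _ ihy ihz =>
    rw [Submodule.Quotient.mk_add]; exact add_mem ihy ihz
  | smul r y _ ihy =>
    rw [← Module.Quotient.mk_smul_mk]; exact Submodule.smul_mem _ _ ihy

end MuGenLemmas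

end ThmAux

open ThmAux

/-- Theorem 4.5(1): for a Cohen–Macaulay semi-standard graded ring `R` with canonical
module `Ω` and a degree-0 injection `φ : R → ω_R(−a)` with cokernel `C`, the minimal
number of generators of `C` equals `r(R) − 1`, where `r(R) = μ(ω_R)` is the
Cohen–Macaulay type. -/
theorem muGen_coker_eq_type_sub_one
(k : Type*) [Field k] (R : Type*) [CommRing R] [Algebra k R]
    (𝒜 : ℕ → Submodule k R) [GradedAlgebra 𝒜]
    (hfd : ∀ i, FiniteDimensional k (𝒜 i))
    (hnoeth : IsNoetherianRing R)
    -- semi-standard graded: `R` is a finite module over `k[R₁]`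
    (hss : Module.Finite (Algebra.adjoin k ((𝒜 1 : Submodule k R) : Set R)) R)
    (d s : ℕ) (h : ℕ → ℤ) (hhs : h s ≠ 0)
    (hdim : ringKrullDim R = d)
    -- the `h`-vector: Hilbert series of `R` is `(∑ h j t^j) / (1−t)^d`
    (hHS : (PowerSeries.mk fun i => (Module.finrank k (𝒜 i) : ℤ)) * (1 - PowerSeries.X) ^ d
      = ∑ j ∈ Finset.range (s + 1), PowerSeries.C (h j) * PowerSeries.X ^ j)
    -- `R` is Cohen–Macaulay: a regular sequence of length `d` in the graded maximal ideal
    (hCM : ∃ rs : List R, RingTheory.Sequence.IsRegular R rs ∧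
      (∀ r ∈ rs, r ∈ (HomogeneousIdeal.irrelevant 𝒜).toIdeal) ∧ rs.length = d)
    -- the canonical module `Ω = ω_R`, a finitely generated graded `R`-module with
    -- `a(R) = a` and Hilbert series `(∑ h (s−j) t^{j−a}) / (1−t)^d`
    (Ω : Type*) [AddCommGroup Ω] [Module R Ω] [Module k Ω] [IsScalarTower k R Ω]
    (ℳ : ℤ → Submodule k Ω) [DirectSum.Decomposition ℳ]
    (hsmul : ∀ (i : ℕ) (j : ℤ), ∀ r ∈ 𝒜 i, ∀ x ∈ ℳ j, r • x ∈ ℳ (i + j))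
    (hΩfg : Module.Finite R Ω)
    (a : ℤ) (hbot : ∀ n : ℤ, n < -a → ℳ n = ⊥) (hne : ℳ (-a) ≠ ⊥)
    (hΩfd : ∀ n : ℤ, FiniteDimensional k (ℳ n))
    (hΩHS : (PowerSeries.mk fun i : ℕ => (Module.finrank k (ℳ ((i : ℤ) - a)) : ℤ))
        * (1 - PowerSeries.X) ^ d
      = ∑ j ∈ Finset.range (s + 1), PowerSeries.C (h (s - j)) * PowerSeries.X ^ j)    -- condition (4.2): a degree-0 injection `φ : R → ω_R(−a)`
    (φ : R →ₗ[R] Ω) (hφinj : Function.Injective φ)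
    (hφdeg : ∀ (n : ℕ), ∀ x ∈ 𝒜 n, φ x ∈ ℳ ((n : ℤ) - a)) :
    (muGen R (Ω ⧸ LinearMap.range φ) : ℤ) = (muGen R Ω : ℤ) - 1 := by
  classical
  -- ## Basic setup
  set x : Ω := φ 1 with hxdef
  have hx : x ∈ ℳ (-a) := by
    have := hφdeg 0 1 (SetLike.one_mem_graded 𝒜)
    simpa using this
  have hφx : ∀ r : R, φ r = r • x := by
    intro r
    have h1 : φ (r • (1:R)) = r • φ 1 := map_smul φ r 1
    simpa using h1
  -- Nontrivial R
  have hRnt : Nontrivial R := by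
    by_contra hR
    rw [not_nontrivial_iff_subsingleton] at hR
    have h0 : (PowerSeries.mk fun i => (Module.finrank k (𝒜 i) : ℤ)) = 0 := by
      ext i
      have : Subsingleton (𝒜 i) := by
        constructor; intro u v; ext
        exact Subsingleton.elim _ _
      rw [PowerSeries.coeff_mk, Module.finrank_zero_of_subsingleton]
      simp
    rw [h0, zero_mul] at hHS
    have hco := congrArg (PowerSeries.coeff s) hHS.symm
    rw [map_sum, map_zero] at hco
    have hval : ∀ j ∈ Finset.range (s+1),
        (PowerSeries.coeff s) (PowerSeries.C (h j) * PowerSeries.X ^ j)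
          = if s = j then h j else 0 := by
      intro j _
      rw [PowerSeries.coeff_C_mul, PowerSeries.coeff_X_pow]
      simp [mul_ite]
    rw [Finset.sum_congr rfl hval, Finset.sum_ite_eq (Finset.range (s+1)) s h] at hco
    simp at hco
    exact hhs hco
  have hxne : x ≠ 0 := by
    intro hx0
    have : φ (1:R) = φ 0 := by rw [map_zero, ← hxdef, hx0]
    exact one_ne_zero (hφinj this)
  have hann : ∀ r : R, r • x = 0 → r = 0 := by
    intro r hr
    have : φ r = φ 0 := by rw [map_zero, hφx r, hr]
    exact hφinj this
  have hxker : x ∈ LinearMap.range φ := ⟨1, rfl⟩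
  -- ## Ideals
  set 𝔪 : Ideal R := (HomogeneousIdeal.irrelevant 𝒜).toIdeal with h𝔪
  set I₀ : Ideal R := Ideal.span {z : R | z ∈ 𝒜 0 ∧ IsNilpotent z} with hI₀def
  have hI₀nilgen : ∀ z ∈ I₀, IsNilpotent (p0 𝒜 z) := by
    intro z hz
    induction hz using Submodule.span_induction with
    | mem g hg => rw [p0_of_mem 𝒜 hg.1]; exact hg.2
    | zero => rw [map_zero]; exact IsNilpotent.zero
    | add y z _ _ ihy ihz =>
      rw [map_add]; exact (Commute.all _ _).isNilpotent_add ihy ihz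
    | smul r y _ ihy =>
      rw [smul_eq_mul, map_mul]
      exact (Commute.all _ _).isNilpotent_mul_left ihy
  have hI₀0 : ∀ c ∈ I₀, p0 𝒜 c ∈ I₀ := by
    intro c hc
    induction hc using Submodule.span_induction with
    | mem g hg => rw [p0_of_mem 𝒜 hg.1]; exact Submodule.subset_span hg
    | zero => rw [map_zero]; exact zero_mem _
    | add y z _ _ ihy ihz => rw [map_add]; exact add_mem ihy ihz
    | smul r y _ ihy =>
      rw [smul_eq_mul, map_mul]
      exact Ideal.mul_mem_left _ _ ihy
  have hI₀pow : ∃ np : ℕ, (I₀ : Ideal R) ^ (np + 1) = ⊥ := by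
    have hle : I₀ ≤ nilradical R := by
      rw [hI₀def, Ideal.span_le]
      intro z hz
      exact mem_nilradical.mpr hz.2
    obtain ⟨np, hnp⟩ := IsNoetherianRing.isNilpotent_nilradical R
    refine ⟨np, le_bot_iff.mp ?_⟩
    calc I₀ ^ (np + 1) ≤ I₀ ^ np := Ideal.pow_le_pow_right (Nat.le_succ np)
    _ ≤ (nilradical R) ^ np := Ideal.pow_right_mono hle np
    _ = ⊥ := hnp
  set 𝔪hat : Ideal R := 𝔪 ⊔ I₀ with hmhatdef
  have hp0hat : ∀ z ∈ 𝔪hat, IsNilpotent (p0 𝒜 z) := by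
    intro z hz
    rcases Submodule.mem_sup.mp hz with ⟨z₁, h₁, z₂, h₂, rfl⟩
    rw [map_add, (mem_irrelevant_iff' 𝒜 z₁).mp h₁, zero_add]
    exact hI₀nilgen z₂ h₂
  have hnil0 : ∀ z : R, z ∈ 𝒜 0 → z ∈ 𝔪hat → IsNilpotent z := by
    intro z h0 hh
    rw [← p0_of_mem 𝒜 h0]
    exact hp0hat z hh
  have hidemnil : ∀ z : R, IsIdempotentElem z → IsNilpotent z → z = 0 := by
    intro z hid hnp
    obtain ⟨nz, hnz⟩ := hnp
    cases nz with
    | zero =>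
      rw [pow_zero] at hnz
      rw [← one_mul z, hnz, zero_mul]
    | succ nz => rw [hid.pow_succ_eq] at hnz; exact hnz
  have hmhat_ne : 𝔪hat ≠ ⊤ := by
    intro hT
    have h1 : (1:R) ∈ 𝔪hat := hT ▸ Submodule.mem_top
    obtain ⟨nz, hnz⟩ := hnil0 1 (SetLike.one_mem_graded 𝒜) h1
    rw [one_pow] at hnz
    exact one_ne_zero hnz
  -- ## The artinian quotient and its maximal ideals
  haveI : Nontrivial (R ⧸ 𝔪hat) := Ideal.Quotient.nontrivial_iff.mpr hmhat_ne
  haveI hfdQ : Module.Finite k (R ⧸ 𝔪hat) := by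
    have hsurj : Function.Surjective
        ((Ideal.Quotient.mkₐ k 𝔪hat).toLinearMap.comp (𝒜 0).subtype) := by
      intro q
      obtain ⟨r, rfl⟩ := Ideal.Quotient.mk_surjective q
      refine ⟨⟨p0 𝒜 r, p0_mem 𝒜 r⟩, ?_⟩
      show Ideal.Quotient.mk 𝔪hat (p0 𝒜 r) = Ideal.Quotient.mk 𝔪hat r
      rw [Ideal.Quotient.mk_eq_mk_iff_sub_mem]
      have heq : p0 𝒜 r - r = -(r - p0 𝒜 r) := by ring
      rw [heq]
      exact neg_mem (Ideal.mem_sup_left (sub_p0_mem_irrelevant 𝒜 r))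
    haveI := hfd 0
    exact Module.Finite.of_surjective _ hsurj
  haveI : IsArtinianRing (R ⧸ 𝔪hat) :=
    isArtinian_of_tower k (inferInstance : IsArtinian k (R ⧸ 𝔪hat))
  haveI : IsReduced (R ⧸ 𝔪hat) := by
    constructor
    intro q hq
    obtain ⟨r, rfl⟩ := Ideal.Quotient.mk_surjective q
    obtain ⟨nz, hnz⟩ := hq
    rw [← map_pow, Ideal.Quotient.eq_zero_iff_mem] at hnz
    rw [Ideal.Quotient.eq_zero_iff_mem]
    have hb : IsNilpotent (p0 𝒜 r) := by
      have h1 : IsNilpotent ((p0 𝒜 r) ^ nz) := by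
        rw [← map_pow]
        exact hp0hat _ hnz
      exact h1.of_pow
    have h2 : p0 𝒜 r ∈ I₀ := Submodule.subset_span ⟨p0_mem 𝒜 r, hb⟩
    have hr : r = (r - p0 𝒜 r) + p0 𝒜 r := by ring
    rw [hr]
    exact add_mem (Ideal.mem_sup_left (sub_p0_mem_irrelevant 𝒜 r))
      (Ideal.mem_sup_right h2)
  set maxS : Finset (Ideal R) :=
    ((IsArtinianRing.setOfPred_isMaximal_finite (R ⧸ 𝔪hat)).toFinset).image
      (fun J => Ideal.comap (Ideal.Quotient.mk 𝔪hat) J) with hmaxSdef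
  have hmaxS : ∀ m ∈ maxS, m.IsMaximal ∧ 𝔪hat ≤ m := by
    intro m hm
    rw [hmaxSdef, Finset.mem_image] at hm
    obtain ⟨J, hJ, rfl⟩ := hm
    haveI hJm : J.IsMaximal := (Set.Finite.mem_toFinset _).mp hJ
    constructor
    · exact Ideal.comap_isMaximal_of_surjective _ Ideal.Quotient.mk_surjective
    · intro z hz
      show Ideal.Quotient.mk 𝔪hat z ∈ J
      rw [Ideal.Quotient.eq_zero_iff_mem.mpr hz]
      exact zero_mem J
  have hInf : ∀ r : R, (∀ m ∈ maxS, r ∈ m) → r ∈ 𝔪hat := by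
    intro r hr
    have hjac : Ideal.Quotient.mk 𝔪hat r ∈ (⊥ : Ideal (R ⧸ 𝔪hat)).jacobson := by
      rw [Ideal.jacobson]
      refine Ideal.mem_sInf.mpr ?_
      rintro J ⟨-, hJmax⟩
      haveI := hJmax
      exact hr (Ideal.comap (Ideal.Quotient.mk 𝔪hat) J)
        (Finset.mem_image.mpr ⟨J, (Set.Finite.mem_toFinset _).mpr hJmax, rfl⟩)
    obtain ⟨nj, hnj⟩ := IsArtinianRing.isNilpotent_jacobson_bot (R := R ⧸ 𝔪hat)
    have hpow : (Ideal.Quotient.mk 𝔪hat r) ^ nj = 0 := by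
      have := Ideal.pow_mem_pow hjac nj
      rw [hnj] at this
      simpa using this
    have h0 : Ideal.Quotient.mk 𝔪hat r = 0 := by
      have hnp : IsNilpotent (Ideal.Quotient.mk 𝔪hat r) := ⟨nj, hpow⟩
      exact hnp.eq_zero
    exact Ideal.Quotient.eq_zero_iff_mem.mp h0
  have hmaxSne : maxS.Nonempty := by
    obtain ⟨J, hJ⟩ := Ideal.exists_maximal (R ⧸ 𝔪hat)
    exact ⟨_, Finset.mem_image.mpr ⟨J, (Set.Finite.mem_toFinset _).mpr hJ, rfl⟩⟩
  -- ## CRT elements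
  have hb : ∀ m ∈ maxS, ∃ b : R, (b - 1 ∈ m) ∧ ∀ m' ∈ maxS, m' ≠ m → b ∈ m' := by
    intro m hm
    have hmmax := (hmaxS m hm).1
    have hc : ∀ m' ∈ maxS.erase m, ∃ c : R, c ∈ m' ∧ c - 1 ∈ m := by
      intro m' hm'
      have hne' : m' ≠ m := (Finset.mem_erase.mp hm').1
      have hm'max := (hmaxS m' (Finset.mem_erase.mp hm').2).1
      have hsup : m' ⊔ m = ⊤ := Ideal.IsMaximal.coprime_of_ne hm'max hmmax hne'
      have h1 : (1:R) ∈ m' ⊔ m := hsup ▸ Submodule.mem_top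
      rcases Submodule.mem_sup.mp h1 with ⟨c, hcm, u, hu, hcu⟩
      refine ⟨c, hcm, ?_⟩
      have : c - 1 = -u := by rw [← hcu]; ring
      rw [this]; exact neg_mem hu
    choose c hc1 hc2 using hc
    refine ⟨∏ m' ∈ (maxS.erase m).attach, c m'.1 m'.2, ?_, ?_⟩
    · have key : ∀ (sf : Finset {z // z ∈ maxS.erase m}),
          (∏ m' ∈ sf, c m'.1 m'.2) - 1 ∈ m := by
        intro sf
        induction sf using Finset.induction_on with
        | empty => simpa using zero_mem m
        | @insert a sf hni ih =>
          rw [Finset.prod_insert hni]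
          have heq : c a.1 a.2 * (∏ m' ∈ sf, c m'.1 m'.2) - 1
              = c a.1 a.2 * ((∏ m' ∈ sf, c m'.1 m'.2) - 1) + (c a.1 a.2 - 1) := by
            ring
          rw [heq]
          exact add_mem (Ideal.mul_mem_left _ _ ih) (hc2 a.1 a.2)
      exact key _
    · intro m' hm' hne'
      have hmem : (⟨m', Finset.mem_erase.mpr ⟨hne', hm'⟩⟩ : {z // z ∈ maxS.erase m})
          ∈ (maxS.erase m).attach := Finset.mem_attach _ _
      rw [← Finset.mul_prod_erase _ _ hmem]
      exact Ideal.mul_mem_right _ _ (hc1 _ _)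
  choose bfun hbfun1 hbfun2 using hb
  -- ## Idempotents
  have he : ∀ m ∈ maxS, ∃ e : R, IsIdempotentElem e ∧ e ∈ 𝒜 0 ∧ e - 1 ∈ m ∧
      ∀ m' ∈ maxS, m' ≠ m → e ∈ m' := by
    intro m hm
    set b := p0 𝒜 (bfun m hm) with hbdef
    have hb0 : b ∈ 𝒜 0 := p0_mem 𝒜 _
    have hbm : ∀ m'' ∈ maxS, b - bfun m hm ∈ m'' := by
      intro m'' hm''
      have h2 : 𝔪 ≤ m'' := le_trans le_sup_left (hmaxS m'' hm'').2
      have heq : b - bfun m hm = -(bfun m hm - b) := by ring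
      rw [heq]
      exact neg_mem (h2 (sub_p0_mem_irrelevant 𝒜 _))
    set ν := b * b - b with hν
    have hν0 : ν ∈ 𝒜 0 := by
      refine sub_mem ?_ hb0
      exact SetLike.mul_mem_graded hb0 hb0
    have hνm : ∀ m'' ∈ maxS, ν ∈ m'' := by
      intro m'' hm''
      by_cases hmm : m'' = m
      · have hb1 : b - 1 ∈ m := by
          have heq : b - 1 = (b - bfun m hm) + (bfun m hm - 1) := by ring
          rw [heq]
          exact add_mem (hbm m hm) (hbfun1 m hm)
        have heq : ν = b * (b - 1) := by rw [hν]; ring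
        rw [heq, hmm]
        exact Ideal.mul_mem_left _ _ hb1
      · have hbm'' : b ∈ m'' := by
          have heq : b = (b - bfun m hm) + bfun m hm := by ring
          rw [heq]
          exact add_mem (hbm m'' hm'') (hbfun2 m hm m'' hm'' hmm)
        exact sub_mem (Ideal.mul_mem_left _ _ hbm'') hbm''
    have hνnil : IsNilpotent ν := hnil0 ν hν0 (hInf ν hνm)
    have hker : ∀ z ∈ RingHom.ker (Ideal.Quotient.mk (Ideal.span {ν})), IsNilpotent z := by
      intro z hz
      rw [Ideal.mk_ker] at hz
      obtain ⟨w, rfl⟩ := Ideal.mem_span_singleton'.mp hz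
      exact (Commute.all _ _).isNilpotent_mul_left hνnil
    have hidem : IsIdempotentElem (Ideal.Quotient.mk (Ideal.span {ν}) b) := by
      show _ * _ = _
      rw [← map_mul, Ideal.Quotient.mk_eq_mk_iff_sub_mem]
      exact Ideal.subset_span rfl
    obtain ⟨E, hEid, hEeq⟩ := exists_isIdempotentElem_eq_of_ker_isNilpotent _ hker _
      ⟨b, rfl⟩ hidem
    have hEb : E - b ∈ Ideal.span {ν} := by
      rw [← Ideal.Quotient.mk_eq_mk_iff_sub_mem]
      exact hEeq
    have hp0Eb : p0 𝒜 E - b ∈ Ideal.span {ν} := by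
      obtain ⟨w, hw⟩ := Ideal.mem_span_singleton'.mp hEb
      refine Ideal.mem_span_singleton'.mpr ⟨p0 𝒜 w, ?_⟩
      have heq : p0 𝒜 E - b = p0 𝒜 (E - b) := by
        rw [map_sub, hbdef, p0_of_mem 𝒜 (p0_mem 𝒜 _)]
      rw [heq, ← hw, map_mul, p0_of_mem 𝒜 hν0]
    have hspanle : ∀ m'' ∈ maxS, Ideal.span {ν} ≤ m'' := fun m'' hm'' =>
      (Ideal.span_singleton_le_iff_mem _).mpr (hνm m'' hm'')
    refine ⟨p0 𝒜 E, ?_, p0_mem 𝒜 E, ?_, ?_⟩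
    · show _ * _ = _
      rw [← map_mul, hEid.eq]
    · have heq : p0 𝒜 E - 1 = (p0 𝒜 E - b) + (b - bfun m hm) + (bfun m hm - 1) := by
        ring
      rw [heq]
      exact add_mem (add_mem (hspanle m hm hp0Eb) (hbm m hm)) (hbfun1 m hm)
    · intro m' hm' hne'
      have heq : p0 𝒜 E = (p0 𝒜 E - b) + (b - bfun m hm) + bfun m hm := by ring
      rw [heq]
      exact add_mem (add_mem (hspanle m' hm' hp0Eb) (hbm m' hm'))
        (hbfun2 m hm m' hm' hne')
  choose emfun hem1 hem2 hem3 hem4 using he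
  set efun : Ideal R → R := fun m => if hm : m ∈ maxS then emfun m hm else 0 with hefun
  have hefun_eq : ∀ (m) (hm : m ∈ maxS), efun m = emfun m hm := fun m hm => dif_pos hm
  have hee1 : ∀ m ∈ maxS, IsIdempotentElem (efun m) := by
    intro m hm; rw [hefun_eq m hm]; exact hem1 m hm
  have hee2 : ∀ m ∈ maxS, efun m ∈ 𝒜 0 := by
    intro m hm; rw [hefun_eq m hm]; exact hem2 m hm
  have hee3 : ∀ m ∈ maxS, efun m - 1 ∈ m := by
    intro m hm; rw [hefun_eq m hm]; exact hem3 m hm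
  have hee4 : ∀ m ∈ maxS, ∀ m' ∈ maxS, m' ≠ m → efun m ∈ m' := by
    intro m hm m' hm' hne'; rw [hefun_eq m hm]; exact hem4 m hm m' hm' hne'
  have horth : ∀ m ∈ maxS, ∀ m' ∈ maxS, m ≠ m' → efun m * efun m' = 0 := by
    intro m hm m' hm' hmm
    refine hidemnil _ ?_ ?_
    · show efun m * efun m' * (efun m * efun m') = efun m * efun m'
      have h1 := (hee1 m hm).eq
      have h2 := (hee1 m' hm').eq
      calc efun m * efun m' * (efun m * efun m')
          = (efun m * efun m) * (efun m' * efun m') := by ring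
        _ = efun m * efun m' := by rw [h1, h2]
    · refine hnil0 _ (SetLike.mul_mem_graded (hee2 m hm) (hee2 m' hm'))
        (hInf _ fun m'' hm'' => ?_)
      by_cases h : m'' = m
      · subst h
        exact Ideal.mul_mem_left _ _ (hee4 m' hm' m'' hm'' hmm)
      · exact Ideal.mul_mem_right _ _ (hee4 m hm m'' hm'' h)
  have hsum1 : ∑ m ∈ maxS, efun m = 1 := by
    set u := ∑ m ∈ maxS, efun m with hu
    have hu0 : u ∈ 𝒜 0 := Submodule.sum_mem _ fun m hm => hee2 m hm
    have h1u : ∀ m'' ∈ maxS, (1:R) - u ∈ m'' := by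
      intro m'' hm''
      have h2 : ∑ m ∈ maxS.erase m'', efun m ∈ m'' :=
        Submodule.sum_mem _ fun m hm =>
          hee4 m (Finset.mem_of_mem_erase hm) m'' hm''
            (Ne.symm (Finset.ne_of_mem_erase hm))
      have h3 : (1:R) - efun m'' ∈ m'' := by
        have heq : (1:R) - efun m'' = -(efun m'' - 1) := by ring
        rw [heq]; exact neg_mem (hee3 m'' hm'')
      have h4 : ∑ m ∈ maxS.erase m'', efun m = u - efun m'' :=
        Finset.sum_erase_eq_sub hm''
      have heq : (1:R) - u = ((1:R) - efun m'') - (∑ m ∈ maxS.erase m'', efun m) := by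
        rw [h4]; ring
      rw [heq]; exact sub_mem h3 h2
    have hunil : IsNilpotent ((1:R) - u) :=
      hnil0 _ (sub_mem (SetLike.one_mem_graded 𝒜) hu0) (hInf _ h1u)
    have huid : IsIdempotentElem u := by
      show u * u = u
      rw [hu, Finset.sum_mul_sum]
      have hrow : ∀ m ∈ maxS, (∑ m' ∈ maxS, efun m * efun m') = efun m := by
        intro m hm
        rw [Finset.sum_eq_single m]
        · exact (hee1 m hm).eq
        · intro m' hm' hne'
          exact horth m hm m' hm' (Ne.symm hne')
        · intro hms; exact absurd hm hms
      rw [Finset.sum_congr rfl hrow]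
    have h0 : (1:R) - u = 0 := hidemnil _ huid.one_sub hunil
    have := sub_eq_zero.mp h0
    rw [hu] at this
    exact this.symm

  -- ## x is not in m • Ω for any m ∈ maxS
  have hxnotm : ∀ m ∈ maxS, x ∉ (m • ⊤ : Submodule R Ω) := by
    intro m hm hxm
    set Gx : Set Ω := {y | ∃ cc w, cc ∈ 𝒜 0 ∧ cc ∈ m ∧ w ∈ ℳ (-a) ∧ y = cc • w} with hGx
    have hpi : ∀ y ∈ (m • (⊤ : Submodule R Ω) : Submodule R Ω),
        piM ℳ (-a) y ∈ AddSubmonoid.closure Gx := by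
      intro y hy
      refine Submodule.smul_induction_on hy (fun cc hcc w _ => ?_)
        (fun y z hy hz => by rw [map_add]; exact add_mem hy hz)
      refine piM_smul_mem 𝒜 ℳ hsmul _ cc w (-a) fun j => ?_
      rcases Nat.eq_zero_or_pos j with hj | hj
      · subst hj
        simp only [Nat.cast_zero, sub_zero]
        refine AddSubmonoid.subset_closure
          ⟨(DirectSum.decompose 𝒜 cc 0 : R), piM ℳ (-a) w, SetLike.coe_mem _, ?_,
            piM_mem ℳ _ w, rfl⟩
        rw [← GradedRing.projZeroRingHom_apply]
        have h2 : 𝔪 ≤ m := le_trans le_sup_left (hmaxS m hm).2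
        have heq : p0 𝒜 cc = cc - (cc - p0 𝒜 cc) := by ring
        rw [heq]
        exact sub_mem hcc (h2 (sub_p0_mem_irrelevant 𝒜 cc))
      · have hbz : piM ℳ (-a - (j:ℤ)) w = 0 := by
          have hmem := piM_mem ℳ (-a - (j:ℤ)) w
          rw [hbot _ (by omega)] at hmem
          simpa using hmem
        rw [hbz, smul_zero]
        exact zero_mem _
    have hxV : x ∈ AddSubmonoid.closure Gx := by
      have := hpi x hxm
      rwa [piM_of_mem_same ℳ hx] at this
    set z : Ω := efun m • x with hzdef
    have hPex : ∃ t : ℕ, ∀ c ∈ (I₀ ^ t : Ideal R), c • z = 0 := by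
      obtain ⟨np, hnp⟩ := hI₀pow
      refine ⟨np + 1, fun c hc => ?_⟩
      rw [hnp] at hc
      have hc0 : c = 0 := by simpa using hc
      rw [hc0, zero_smul]
    set q := Nat.find hPex with hqdef
    have hq : ∀ c ∈ (I₀ ^ q : Ideal R), c • z = 0 := Nat.find_spec hPex
    rcases Nat.eq_zero_or_pos q with hq0 | hqpos
    · have h1 : (1:R) ∈ (I₀ ^ q : Ideal R) := by
        rw [hq0, pow_zero, Ideal.one_eq_top]; exact Submodule.mem_top
      have hz0 : z = 0 := by
        have := hq 1 h1; rwa [one_smul] at this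
      have h2 : efun m = 0 := hann _ hz0
      have h3 := hee3 m hm
      rw [h2, zero_sub] at h3
      have h4 : (1:R) ∈ m := by
        have := neg_mem h3; rwa [neg_neg] at this
      exact (hmaxS m hm).1.ne_top ((Ideal.eq_top_iff_one m).mpr h4)
    · have hnotP := Nat.find_min hPex (m := q - 1) (by omega)
      push_neg at hnotP
      obtain ⟨c, hcq, hcz⟩ := hnotP
      have hcontra : ∃ (bb : R) (w : Ω), bb ∈ 𝒜 0 ∧ bb ∈ m ∧ (c * (efun m * bb)) • w ≠ 0 := by
        by_contra hall
        push_neg at hall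
        have hzero : ∀ y ∈ AddSubmonoid.closure Gx, c • (efun m • y) = 0 := by
          intro y hy
          induction hy using AddSubmonoid.closure_induction with
          | mem y hy =>
            obtain ⟨bb, w, hb0, hbm', hwm, rfl⟩ := hy
            have heq : c • (efun m • (bb • w)) = (c * (efun m * bb)) • w := by
              rw [smul_smul, smul_smul, mul_assoc]
            rw [heq]
            exact hall bb w hb0 hbm'
          | zero => rw [smul_zero, smul_zero]
          | add y₁ y₂ h₁ h₂ ih₁ ih₂ =>
            rw [smul_add, smul_add, ih₁, ih₂, add_zero]
        exact hcz (by rw [hzdef]; exact hzero x hxV)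
      obtain ⟨bb, w, hb0, hbm', hnz⟩ := hcontra
      set v := c * (efun m * bb) with hvdef
      have hvI : v ∈ (I₀ ^ q : Ideal R) := by
        have hq1 : q = (q-1) + 1 := by omega
        rw [hq1, pow_succ]
        refine Ideal.mul_mem_mul hcq (Submodule.subset_span ⟨?_, ?_⟩)
        · exact SetLike.mul_mem_graded (hee2 m hm) hb0
        · refine hnil0 _ (SetLike.mul_mem_graded (hee2 m hm) hb0)
            (hInf _ fun m'' hm'' => ?_)
          by_cases hmm : m'' = m
          · rw [hmm]; exact Ideal.mul_mem_left _ _ hbm'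
          · exact Ideal.mul_mem_right _ _ (hee4 m hm m'' hm'' hmm)
      have h3 : v * efun m = v := by
        have h2 := (hee1 m hm).eq
        calc v * efun m = c * (efun m * efun m) * bb := by rw [hvdef]; ring
          _ = c * (efun m * bb) := by rw [h2]; ring
          _ = v := by rw [hvdef]
      have hvx : v • x = 0 := by
        have h1 : v • z = v • x := by
          rw [hzdef, smul_smul, h3]
        rw [← h1]
        exact hq v hvI
      have hv0 : v = 0 := hann v hvx
      exact hnz (by rw [hv0, zero_smul])
  -- ## spanning by homogeneous elements
  set homset : Set Ω := ⋃ d' : ℤ, ((ℳ d' : Submodule k Ω) : Set Ω) with hhomsetdef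
  have hhomspan : Submodule.span R homset = ⊤ := by
    rw [eq_top_iff]
    rintro w -
    have hw : w ∈ Submodule.span k homset := by
      have h1 : (⨆ d' : ℤ, ℳ d') = (⊤ : Submodule k Ω) :=
        (DirectSum.Decomposition.isInternal ℳ).submodule_iSup_eq_top
      rw [Submodule.iSup_eq_span] at h1
      rw [hhomsetdef, h1]
      exact Submodule.mem_top
    induction hw using Submodule.span_induction with
    | mem y hy => exact Submodule.subset_span hy
    | zero => exact zero_mem _
    | add y z _ _ ihy ihz => exact add_mem ihy ihz
    | smul cK y _ ihy =>
      rw [← algebraMap_smul R cK y]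
      exact Submodule.smul_mem _ _ ihy
  -- ## sizes
  obtain ⟨tmin, htmincard, htminspan⟩ := ThmAux.exists_muGen_spanning R (M := Ω)
  set nΩ := muGen R Ω with hnΩ
  have hnpos : 1 ≤ nΩ := by
    by_contra hlt
    have hc0 : tmin.card = 0 := by omega
    rw [Finset.card_eq_zero] at hc0
    rw [hc0] at htminspan
    simp only [Finset.coe_empty, Submodule.span_empty] at htminspan
    have hx2 : x ∈ (⊥ : Submodule R Ω) := htminspan ▸ Submodule.mem_top
    exact hxne (by simpa using hx2)
  set nn := nΩ - 1 with hnn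
  -- ## key per-maximal-ideal construction
  have keyM : ∀ m ∈ maxS, ∃ f : Fin nn → Ω, (∀ j, ∃ dg : ℤ, f j ∈ ℳ dg) ∧
      ∀ w : Ω, ∃ (rr : Fin nn → R) (ss : R),
        w - ((∑ j, rr j • f j) + ss • x) ∈ (m • (⊤ : Submodule R Ω) : Submodule R Ω) := by
    intro m hm
    haveI hmmax : m.IsMaximal := (hmaxS m hm).1
    letI : Field (R ⧸ m) := Ideal.Quotient.field m
    set mkVL : Ω →ₗ[R] (Ω ⧸ (m • ⊤ : Submodule R Ω)) := (m • ⊤ : Submodule R Ω).mkQ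
      with hmkVL
    have hmkVLQ : ∀ y : Ω, mkVL y
        = Submodule.Quotient.mk (p := (m • ⊤ : Submodule R Ω)) y := fun y => rfl
    have hmksmul : ∀ (r : R) (y : Ω),
        (Ideal.Quotient.mk m r) • (mkVL y) = mkVL (r • y) := by
      intro r y
      rw [hmkVLQ, hmkVLQ]
      exact Module.Quotient.mk_smul_mk Ω m r y
    have hVspan : Submodule.span (R ⧸ m)
        ((Submodule.Quotient.mk (p := (m • ⊤ : Submodule R Ω))) '' (↑tmin : Set Ω)) = ⊤ :=
      ThmAux.span_quot R m _ htminspan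
    haveI hVfin : Module.Finite (R ⧸ m) (Ω ⧸ (m • ⊤ : Submodule R Ω)) := by
      constructor
      refine ⟨tmin.image (Submodule.Quotient.mk (p := (m • ⊤ : Submodule R Ω))), ?_⟩
      rw [Finset.coe_image]; exact hVspan
    have hfrV : Module.finrank (R ⧸ m) (Ω ⧸ (m • ⊤ : Submodule R Ω)) ≤ nΩ := by
      have h2 : Module.finrank (R ⧸ m) (Submodule.span (R ⧸ m)
          (↑(tmin.image (Submodule.Quotient.mk (p := (m • ⊤ : Submodule R Ω)))) :
            Set (Ω ⧸ (m • ⊤ : Submodule R Ω)))) ≤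
          (tmin.image (Submodule.Quotient.mk (p := (m • ⊤ : Submodule R Ω)))).card :=
        finrank_span_finset_le_card _
      rw [Finset.coe_image, hVspan, finrank_top] at h2
      calc Module.finrank (R ⧸ m) (Ω ⧸ (m • ⊤ : Submodule R Ω))
          ≤ (tmin.image _).card := h2
        _ ≤ tmin.card := Finset.card_image_le
        _ = nΩ := htmincard
    set xb := Submodule.Quotient.mk (p := (m • ⊤ : Submodule R Ω)) x with hxbdef
    have hxbne : xb ≠ 0 := by
      rw [hxbdef, Ne, Submodule.Quotient.mk_eq_zero]
      exact hxnotm m hm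
    set W : Submodule (R ⧸ m) (Ω ⧸ (m • ⊤ : Submodule R Ω)) :=
      Submodule.span (R ⧸ m) {xb} with hWdef
    have hfrU : Module.finrank (R ⧸ m) ((Ω ⧸ (m • ⊤ : Submodule R Ω)) ⧸ W) ≤ nn := by
      have h2 := Submodule.finrank_quotient_add_finrank W
      have hfrW : Module.finrank (R ⧸ m) W = 1 := by
        rw [hWdef]; exact finrank_span_singleton hxbne
      omega
    -- spanning of U by images of homogeneous elements
    have hUspan : Submodule.span (R ⧸ m) (W.mkQ '' ((fun y => mkVL y) '' homset)) = ⊤ := by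
      have h3 : Submodule.span (R ⧸ m) ((fun y => mkVL y) '' homset) = ⊤ :=
        ThmAux.span_quot R m _ hhomspan
      rw [← Submodule.map_span, h3, Submodule.map_top, Submodule.range_mkQ]
    obtain ⟨bset, hbsub, -, hbspansup, hbli⟩ := exists_linearIndepOn_id_extension
      (linearIndepOn_empty (R ⧸ m) id) (Set.empty_subset (W.mkQ '' ((fun y => mkVL y) '' homset)))
    have hbspan : Submodule.span (R ⧸ m) bset = ⊤ := by
      rw [eq_top_iff, ← hUspan]
      exact Submodule.span_le.mpr hbspansup
    have hbfin : bset.Finite := Set.finite_coe_iff.mp hbli.linearIndependent.finite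
    haveI : Fintype bset := hbfin.fintype
    have hbcard : hbfin.toFinset.card ≤ nn := by
      have h4 := hbli.linearIndependent.fintype_card_le_finrank
      rw [Set.Finite.card_toFinset]
      exact le_trans h4 hfrU
    -- enumerate and choose homogeneous preimages
    have hpre : ∀ v ∈ bset, ∃ ω : Ω, (∃ dg : ℤ, ω ∈ ℳ dg) ∧ W.mkQ (mkVL ω) = v := by
      intro v hv
      obtain ⟨v', hv', rfl⟩ := hbsub hv
      obtain ⟨ω, hω, rfl⟩ := hv'
      obtain ⟨sd, hsd⟩ := Set.mem_iUnion.mp hω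
      exact ⟨ω, ⟨_, hsd⟩, rfl⟩
    set l := hbfin.toFinset.toList with hldef
    have hlen : l.length ≤ nn := by
      rw [hldef, Finset.length_toList]; exact hbcard
    have hchoice : ∀ j : Fin nn, ∃ ω : Ω, (∃ dg : ℤ, ω ∈ ℳ dg) ∧
        ∀ hj : (j : ℕ) < l.length, W.mkQ (mkVL ω) = l.get ⟨j, hj⟩ := by
      intro j
      by_cases hj : (j:ℕ) < l.length
      · have hmem : l.get ⟨j, hj⟩ ∈ bset := by
          have h6 : l.get ⟨j, hj⟩ ∈ hbfin.toFinset :=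
            Finset.mem_toList.mp (List.get_mem l ⟨j, hj⟩)
          exact hbfin.mem_toFinset.mp h6
        obtain ⟨ω, h1, h2⟩ := hpre _ hmem
        exact ⟨ω, h1, fun _ => h2⟩
      · exact ⟨0, ⟨0, zero_mem _⟩, fun hc => absurd hc hj⟩
    choose f hf1 hf2 using hchoice
    refine ⟨f, hf1, ?_⟩
    have hrange : bset ⊆ Set.range (fun j : Fin nn => W.mkQ (mkVL (f j))) := by
      intro v hv
      have hvl : v ∈ l := by
        rw [hldef]
        exact Finset.mem_toList.mpr (hbfin.mem_toFinset.mpr hv)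
      obtain ⟨i, hi⟩ := List.get_of_mem hvl
      refine ⟨⟨i.1, lt_of_lt_of_le i.2 hlen⟩, ?_⟩
      show W.mkQ (mkVL (f _)) = v
      rw [hf2 _ i.2]
      exact hi
    have hspanf : Submodule.span (R ⧸ m)
        (Set.range (fun j : Fin nn => W.mkQ (mkVL (f j)))) = ⊤ := by
      rw [eq_top_iff, ← hbspan]
      exact Submodule.span_le.mpr (subset_trans hrange Submodule.subset_span)
    intro w
    have hw : W.mkQ (mkVL w) ∈ Submodule.span (R ⧸ m)
        (Set.range (fun j : Fin nn => W.mkQ (mkVL (f j)))) := by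
      rw [hspanf]; exact Submodule.mem_top
    obtain ⟨cf, hcf⟩ := (Submodule.mem_span_range_iff_exists_fun (R ⧸ m)).mp hw
    have hlift : ∀ j, ∃ rj : R, Ideal.Quotient.mk m rj = cf j := fun j =>
      Ideal.Quotient.mk_surjective _
    choose rf hrf using hlift
    have hW1 : mkVL w - ∑ j, cf j • mkVL (f j) ∈ W := by
      have h7 : W.mkQ (mkVL w - ∑ j, cf j • mkVL (f j)) = 0 := by
        rw [map_sub, map_sum]
        rw [show (∑ j, W.mkQ (cf j • mkVL (f j))) = ∑ j, cf j • W.mkQ (mkVL (f j)) by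
          exact Finset.sum_congr rfl fun j _ => map_smul _ _ _]
        rw [hcf, sub_self]
      rwa [← Submodule.Quotient.mk_eq_zero W, ← Submodule.mkQ_apply]
    rw [hWdef] at hW1
    obtain ⟨μ, hμ⟩ := Submodule.mem_span_singleton.mp hW1
    obtain ⟨ss, rfl⟩ := Ideal.Quotient.mk_surjective μ
    refine ⟨rf, ss, ?_⟩
    have h8 : mkVL (w - ((∑ j, rf j • f j) + ss • x)) = 0 := by
      rw [map_sub, map_add, map_sum]
      have h9 : ∀ j, mkVL (rf j • f j) = cf j • mkVL (f j) := by
        intro j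
        rw [← hrf j, hmksmul]
      rw [Finset.sum_congr rfl fun j _ => h9 j]
      have h10 : mkVL (ss • x) = (Ideal.Quotient.mk m ss) • xb := by
        rw [← hmksmul]; rfl
      rw [h10, hμ]
      abel
    rw [hmkVLQ] at h8
    rwa [Submodule.Quotient.mk_eq_zero] at h8
  choose ffun hffun1 hffun2 using keyM

  -- ## the generating set upstairs
  set gset : Set Ω := {y | ∃ m, ∃ hm : m ∈ maxS, ∃ j : Fin nn, y = efun m • ffun m hm j}
    with hgsetdef
  set T' : Submodule R Ω := Submodule.span R (gset ∪ {x}) with hT'def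
  have hTcomp : ∀ (n' : ℤ), ∀ w ∈ T', piM ℳ n' w ∈ T' := by
    intro n' w hw
    refine components_mem_span 𝒜 ℳ hsmul _ ?_ w hw n'
    rintro y (⟨m, hm, j, rfl⟩ | hy)
    · obtain ⟨dg, hdg⟩ := hffun1 m hm j
      refine ⟨dg, ?_⟩
      have := hsmul 0 dg (efun m) (hee2 m hm) _ hdg
      simpa using this
    · rw [Set.mem_singleton_iff.mp hy]
      exact ⟨-a, hx⟩
  have hxT' : x ∈ T' := Submodule.subset_span (Set.mem_union_right _ rfl)
  have hcover : ∀ w : Ω, w ∈ T' ⊔ I₀ • (⊤ : Submodule R Ω) ⊔ 𝔪 • (⊤ : Submodule R Ω) := by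
    intro w
    have hT'le : T' ≤ T' ⊔ I₀ • (⊤ : Submodule R Ω) ⊔ 𝔪 • (⊤ : Submodule R Ω) :=
      le_trans le_sup_left le_sup_left
    have hrest : I₀ • (⊤ : Submodule R Ω) ⊔ 𝔪 • (⊤ : Submodule R Ω) ≤
        T' ⊔ I₀ • (⊤ : Submodule R Ω) ⊔ 𝔪 • (⊤ : Submodule R Ω) :=
      sup_le (le_trans le_sup_right le_sup_left) le_sup_right
    have hw1 : w = ∑ m ∈ maxS, efun m • w := by
      rw [← Finset.sum_smul, hsum1, one_smul]
    rw [hw1]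
    refine Submodule.sum_mem _ fun m hm => ?_
    obtain ⟨rr, ss, hrs⟩ := hffun2 m hm w
    have hdecomp : efun m • w
        = ((∑ j, rr j • (efun m • ffun m hm j)) + ss • (efun m • x))
          + efun m • (w - ((∑ j, rr j • ffun m hm j) + ss • x)) := by
      rw [smul_sub]
      rw [smul_add, Finset.smul_sum]
      have hcomm : ∀ j : Fin nn, efun m • (rr j • ffun m hm j)
          = rr j • (efun m • ffun m hm j) := fun j => smul_comm _ _ _
      rw [Finset.sum_congr rfl fun j _ => hcomm j, smul_comm (efun m) ss x]
      abel
    rw [hdecomp]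
    refine add_mem (hT'le ?_) (hrest ?_)
    · refine add_mem (Submodule.sum_mem _ fun j _ => ?_) ?_
      · exact Submodule.smul_mem _ _
          (Submodule.subset_span (Set.mem_union_left _ ⟨m, hm, j, rfl⟩))
      · exact Submodule.smul_mem _ _ (Submodule.smul_mem _ _ hxT')
    · -- efun m • (m-multiple) lands in I₀ • ⊤ ⊔ 𝔪 • ⊤
      have hρmem : ∀ y ∈ (m • (⊤ : Submodule R Ω) : Submodule R Ω),
          efun m • y ∈ I₀ • (⊤ : Submodule R Ω) ⊔ 𝔪 • (⊤ : Submodule R Ω) := by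
        intro y hy
        refine Submodule.smul_induction_on hy (fun cc hcc u _ => ?_)
          (fun u v hu hv => by rw [smul_add]; exact add_mem hu hv)
        have heq : efun m • (cc • u)
            = (p0 𝒜 (efun m * cc)) • u + (efun m * cc - p0 𝒜 (efun m * cc)) • u := by
          rw [← add_smul, add_sub_cancel, ← smul_smul]
        rw [heq]
        refine add_mem (Submodule.mem_sup_left ?_) (Submodule.mem_sup_right ?_)
        · refine Submodule.smul_mem_smul ?_ Submodule.mem_top
          have hp0eq : p0 𝒜 (efun m * cc) = efun m * p0 𝒜 cc := by
            rw [map_mul, p0_of_mem 𝒜 (hee2 m hm)]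
          rw [hp0eq]
          refine Submodule.subset_span ⟨SetLike.mul_mem_graded (hee2 m hm) (p0_mem 𝒜 cc), ?_⟩
          refine hnil0 _ (SetLike.mul_mem_graded (hee2 m hm) (p0_mem 𝒜 cc))
            (hInf _ fun m'' hm'' => ?_)
          by_cases hmm : m'' = m
          · rw [hmm]
            refine Ideal.mul_mem_left _ _ ?_
            have h2 : 𝔪 ≤ m := le_trans le_sup_left (hmaxS m hm).2
            have heq2 : p0 𝒜 cc = cc - (cc - p0 𝒜 cc) := by ring
            rw [heq2]
            exact sub_mem hcc (h2 (sub_p0_mem_irrelevant 𝒜 cc))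
          · exact Ideal.mul_mem_right _ _ (hee4 m hm m'' hm'' hmm)
        · exact Submodule.smul_mem_smul (sub_p0_mem_irrelevant 𝒜 _) Submodule.mem_top
      exact hρmem _ hrs
  obtain ⟨np, hnp⟩ := hI₀pow
  have hT'top : T' = ⊤ := gradedNakayama 𝒜 ℳ hsmul hbot I₀ hI₀0 np hnp T' hTcomp hcover
  -- ## generators downstairs
  set G : Fin nn → (Ω ⧸ LinearMap.range φ) :=
    fun j => Submodule.Quotient.mk (∑ m ∈ maxS.attach, efun m.1 • ffun m.1 m.2 j) with hGdef
  have hGsmul : ∀ (m : Ideal R) (hm : m ∈ maxS) (j : Fin nn),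
      (Submodule.Quotient.mk (efun m • ffun m hm j) : Ω ⧸ LinearMap.range φ)
        = efun m • G j := by
    intro m hm j
    rw [hGdef]
    have h1 : efun m • (Submodule.Quotient.mk (∑ m' ∈ maxS.attach, efun m'.1 • ffun m'.1 m'.2 j)
        : Ω ⧸ LinearMap.range φ)
        = Submodule.Quotient.mk (efun m • ∑ m' ∈ maxS.attach, efun m'.1 • ffun m'.1 m'.2 j) :=
      (Submodule.Quotient.mk_smul _ _ _).symm
    rw [h1]
    congr 1
    rw [Finset.smul_sum]
    rw [Finset.sum_eq_single (⟨m, hm⟩ : {z // z ∈ maxS})]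
    · rw [smul_smul, (hee1 m hm).eq]
    · intro m' _ hne'
      have hvne : m'.1 ≠ m := fun hcc => hne' (Subtype.ext hcc)
      rw [smul_smul, horth m hm m'.1 m'.2 (Ne.symm hvne), zero_smul]
    · intro hin
      exact absurd (Finset.mem_attach _ _) hin
  have hspanC : Submodule.span R (Set.range G) = ⊤ := by
    rw [eq_top_iff]
    rintro cq -
    obtain ⟨y, rfl⟩ := Submodule.Quotient.mk_surjective _ cq
    have hy : y ∈ Submodule.span R (gset ∪ {x}) := by
      rw [← hT'def, hT'top]; exact Submodule.mem_top
    induction hy using Submodule.span_induction with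
    | mem y hy =>
      rcases hy with ⟨m, hm, j, rfl⟩ | hy
      · rw [hGsmul m hm j]
        exact Submodule.smul_mem _ _ (Submodule.subset_span ⟨j, rfl⟩)
      · rw [Set.mem_singleton_iff.mp hy]
        have h0 : (Submodule.Quotient.mk x : Ω ⧸ LinearMap.range φ) = 0 :=
          (Submodule.Quotient.mk_eq_zero _).mpr hxker
        rw [h0]
        exact zero_mem _
    | zero =>
      rw [Submodule.Quotient.mk_zero]
      exact zero_mem _
    | add y z _ _ ihy ihz =>
      rw [Submodule.Quotient.mk_add]
      exact add_mem ihy ihz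
    | smul r y _ ihy =>
      rw [Submodule.Quotient.mk_smul]
      exact Submodule.smul_mem _ _ ihy
  have hcardC : muGen R (Ω ⧸ LinearMap.range φ) ≤ nn := by
    have hspan2 : Submodule.span R (↑(Finset.image G Finset.univ) :
        Set (Ω ⧸ LinearMap.range φ)) = ⊤ := by
      rw [Finset.coe_image, Finset.coe_univ, Set.image_univ]
      exact hspanC
    have := ThmAux.muGen_le' R _ hspan2
    have hcard : (Finset.image G Finset.univ).card ≤ nn := by
      calc (Finset.image G Finset.univ).card ≤ (Finset.univ : Finset (Fin nn)).card :=
          Finset.card_image_le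
        _ = nn := by rw [Finset.card_univ, Fintype.card_fin]
    omega
  -- ## the other inequality
  obtain ⟨tC, htCcard, htCspan⟩ :=
    ThmAux.exists_muGen_spanning R (M := Ω ⧸ LinearMap.range φ)
  have hliftex : ∀ cq : Ω ⧸ LinearMap.range φ, ∃ y : Ω,
      (Submodule.Quotient.mk y : Ω ⧸ LinearMap.range φ) = cq := fun cq =>
    Submodule.Quotient.mk_surjective _ cq
  choose liftC hliftC using hliftex
  have hspanL : Submodule.span R
      (↑(insert x (tC.image liftC)) : Set Ω) = ⊤ := by
    rw [eq_top_iff]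
    rintro y -
    set N := Submodule.span R (↑(insert x (tC.image liftC)) : Set Ω) with hNdef
    have hxN : x ∈ N :=
      Submodule.subset_span (Finset.mem_coe.mpr (Finset.mem_insert_self _ _))
    have hclaim : ∀ cq ∈ Submodule.span R (↑tC : Set (Ω ⧸ LinearMap.range φ)),
        ∃ z ∈ N, (Submodule.Quotient.mk z : Ω ⧸ LinearMap.range φ) = cq := by
      intro cq hcq
      induction hcq using Submodule.span_induction with
      | mem c hc =>
        refine ⟨liftC c, ?_, hliftC c⟩
        refine Submodule.subset_span ?_
        refine Finset.mem_coe.mpr (Finset.mem_insert_of_mem ?_)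
        exact Finset.mem_image_of_mem _ (Finset.mem_coe.mp hc)
      | zero => exact ⟨0, zero_mem _, Submodule.Quotient.mk_zero _⟩
      | add c₁ c₂ _ _ ih₁ ih₂ =>
        obtain ⟨z₁, hz₁, he₁⟩ := ih₁
        obtain ⟨z₂, hz₂, he₂⟩ := ih₂
        exact ⟨z₁ + z₂, add_mem hz₁ hz₂, by rw [Submodule.Quotient.mk_add, he₁, he₂]⟩
      | smul r c _ ih =>
        obtain ⟨z, hz, hze⟩ := ih
        exact ⟨r • z, Submodule.smul_mem _ _ hz, by rw [Submodule.Quotient.mk_smul, hze]⟩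
    obtain ⟨z, hzN, hz⟩ := hclaim (Submodule.Quotient.mk y) (htCspan ▸ Submodule.mem_top)
    have hyz : y - z ∈ LinearMap.range φ := by
      have h1 : (Submodule.Quotient.mk y : Ω ⧸ LinearMap.range φ)
          = Submodule.Quotient.mk z := hz.symm
      exact (Submodule.Quotient.eq _).mp h1
    have hrangeN : LinearMap.range φ ≤ N := by
      rintro _ ⟨r, rfl⟩
      rw [hφx r]
      exact Submodule.smul_mem _ _ hxN
    have heq : y = z + (y - z) := by abel
    rw [heq]
    exact add_mem hzN (hrangeN hyz)
  have hup : muGen R Ω ≤ muGen R (Ω ⧸ LinearMap.range φ) + 1 := by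
    have h2 := ThmAux.muGen_le' R _ hspanL
    have h3 : (insert x (tC.image liftC)).card ≤ tC.card + 1 := by
      have h4 := Finset.card_insert_le x (tC.image liftC)
      have h5 := Finset.card_image_le (f := liftC) (s := tC)
      omega
    omega
  omega
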